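/- Let w ∈ S_n, let b = w^ℓ ⋯ w^1 ∈ W_w^ℓ be a decreasing factorization, and let 1 ≤ i < ℓ. If ẽ_i(b) ≠ 0, then ẽ_i(b) is again a decreasing factorization of w into ℓ factors, whose weight is obtained from wt(b) by increasing the i-th entry by 1 and decreasing the (i+1)-st entry by 1; similarly, if f̃_i(b) ≠ 0, then f̃_i(b) ∈ W_w^ℓ and its weight is obtained from wt(b) by decreasing the i-th entry by 1 and increasing the (i+1)-st entry by 1. -/

import Mathlib

open scoped Classical

noncomputable section

def sT (n i : ℕ) : Equiv.Perm (Fin n) :=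
  if h : 1 ≤ i ∧ i < n then Equiv.swap ⟨i - 1, by omega⟩ ⟨i, h.2⟩ else 1

def wordProd (n : ℕ) (l : List ℕ) : Equiv.Perm (Fin n) :=
  (l.map (sT n)).prod

def len (n : ℕ) (w : Equiv.Perm (Fin n)) : ℕ :=
  sInf {k | ∃ l : List ℕ, (∀ i ∈ l, 1 ≤ i ∧ i < n) ∧ wordProd n l = w ∧ l.length = k}

def IsReducedWord (n : ℕ) (w : Equiv.Perm (Fin n)) (l : List ℕ) : Prop :=
  (∀ i ∈ l, 1 ≤ i ∧ i < n) ∧ wordProd n l = w ∧ l.length = len n w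

/-- The decreasing permutation with content `A`: product of the letters of `A`
in decreasing order. -/
def dperm (n : ℕ) (A : Finset ℕ) : Equiv.Perm (Fin n) :=
  wordProd n ((A.sort (· ≤ ·)).reverse)

/-- `c` encodes a decreasing factorization `w = wℓ ⋯ w¹` into `ℓ` decreasing factors,
where `c j` is the content of the factor `w^(j+1)` (0-indexed, so `c 0 = cont w¹`). -/
def IsDecFactorizationC (n ℓ : ℕ) (w : Equiv.Perm (Fin n)) (c : Fin ℓ → Finset ℕ) : Prop :=
  (∀ j, ∀ a ∈ c j, 1 ≤ a ∧ a < n) ∧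
    (List.ofFn fun j => dperm n (c j)).reverse.prod = w ∧
    len n w = ∑ j, (c j).card

/-- Pair the letters of the first list (the content of `w^(i+1)` in decreasing order)
with letters of the second finset (the content of `wⁱ`): each letter `b` is paired with
the smallest still unpaired `a > b`, if it exists.  Returns the pair
(unpaired letters of the first argument, unpaired letters of the second argument). -/
def pairAux : List ℕ → Finset ℕ → Finset ℕ × Finset ℕ
  | [], A => (∅, A)
  | b :: bs, A =>
    if h : (A.filter fun a => b < a).Nonempty then
      pairAux bs (A.erase ((A.filter fun a => b < a).min' h))
    else
      ((pairAux bs A).1 ∪ {b}, (pairAux bs A).2)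

/-- The unpaired letters of `cont w^(i+1)` (first argument `B`) in the
`w^(i+1) wⁱ`-pairing. -/
def Ldata (B A : Finset ℕ) : Finset ℕ :=
  (pairAux ((B.sort (· ≤ ·)).reverse) A).1

/-- The unpaired letters of `cont wⁱ` (second argument `A`) in the
`w^(i+1) wⁱ`-pairing. -/
def Rdata (B A : Finset ℕ) : Finset ℕ :=
  (pairAux ((B.sort (· ≤ ·)).reverse) A).2

/-- The raising crystal operator on a pair of contents `(B, A) = (cont w^(i+1), cont wⁱ)`. -/
def eC (B A : Finset ℕ) : Option (Finset ℕ × Finset ℕ) :=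
  if h : (Ldata B A).Nonempty then
    some (B.erase ((Ldata B A).min' h),
      insert ((Ldata B A).min' h - sInf {j | (Ldata B A).min' h - j - 1 ∉ B}) A)
  else none

/-- The lowering crystal operator on a pair of contents `(B, A) = (cont w^(i+1), cont wⁱ)`. -/
def fC (B A : Finset ℕ) : Option (Finset ℕ × Finset ℕ) :=
  if h : (Rdata B A).Nonempty then
    some (insert ((Rdata B A).max' h + sInf {j | (Rdata B A).max' h + j + 1 ∉ A}) B,
      A.erase ((Rdata B A).max' h))
  else none

/-- The crystal raising operator `ẽᵢ` (1 ≤ i < ℓ) on decreasing factorizations encoded by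
contents; it acts on the factors `w^(i+1) wⁱ`, i.e. on `c ⟨i⟩` and `c ⟨i-1⟩`. -/
def eOp {ℓ : ℕ} (i : ℕ) (c : Fin ℓ → Finset ℕ) : Option (Fin ℓ → Finset ℕ) :=
  if h : 1 ≤ i ∧ i < ℓ then
    match eC (c ⟨i, h.2⟩) (c ⟨i - 1, by omega⟩) with
    | none => none
    | some (B', A') =>
        some (Function.update (Function.update c ⟨i, h.2⟩ B') ⟨i - 1, by omega⟩ A')
  else none

/-- The crystal lowering operator `f̃ᵢ` (1 ≤ i < ℓ) on decreasing factorizations encoded by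
contents. -/
def fOp {ℓ : ℕ} (i : ℕ) (c : Fin ℓ → Finset ℕ) : Option (Fin ℓ → Finset ℕ) :=
  if h : 1 ≤ i ∧ i < ℓ then
    match fC (c ⟨i, h.2⟩) (c ⟨i - 1, by omega⟩) with
    | none => none
    | some (B', A') =>
        some (Function.update (Function.update c ⟨i, h.2⟩ B') ⟨i - 1, by omega⟩ A')
  else none

/-- `d`-fold iterate of `ẽᵢ`. -/
def eIter {ℓ : ℕ} (i : ℕ) : ℕ → (Fin ℓ → Finset ℕ) → Option (Fin ℓ → Finset ℕ)
  | 0, c => some c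
  | d + 1, c => (eOp i c).bind (eIter i d)

/-- `d`-fold iterate of `f̃ᵢ`. -/
def fIter {ℓ : ℕ} (i : ℕ) : ℕ → (Fin ℓ → Finset ℕ) → Option (Fin ℓ → Finset ℕ)
  | 0, c => some c
  | d + 1, c => (fOp i c).bind (fIter i d)


section Part1
variable {n : ℕ}

lemma wordProd_nil : wordProd n [] = 1 := rfl

lemma wordProd_cons (a : ℕ) (l : List ℕ) : wordProd n (a :: l) = sT n a * wordProd n l := by
  simp [wordProd]

lemma wordProd_append (l₁ l₂ : List ℕ) :
    wordProd n (l₁ ++ l₂) = wordProd n l₁ * wordProd n l₂ := by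
  simp [wordProd]

lemma sT_eq {a : ℕ} (h1 : 1 ≤ a) (h2 : a < n) :
    sT n a = Equiv.swap ⟨a - 1, Nat.lt_of_le_of_lt (Nat.sub_le a 1) h2⟩ ⟨a, h2⟩ := by
  rw [sT, dif_pos ⟨h1, h2⟩]

lemma sT_sq {a : ℕ} : sT n a * sT n a = 1 := by
  by_cases h : 1 ≤ a ∧ a < n
  · rw [sT, dif_pos h, Equiv.swap_mul_self]
  · rw [sT, dif_neg h, mul_one]

lemma sT_fix {a : ℕ} (x : Fin n) (h : x.1 + 1 < a ∨ a < x.1) : sT n a x = x := by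
  by_cases hv : 1 ≤ a ∧ a < n
  · rw [sT, dif_pos hv]
    apply Equiv.swap_apply_of_ne_of_ne <;>
      · intro hc
        apply_fun Fin.val at hc
        simp at hc
        omega
  · rw [sT, dif_neg hv]; rfl

lemma wordProd_fix (l : List ℕ) (x : Fin n) (h : ∀ a ∈ l, x.1 + 1 < a ∨ a < x.1) :
    wordProd n l x = x := by
  induction l with
  | nil => rfl
  | cons a l ih =>
    rw [wordProd_cons]
    simp only [Equiv.Perm.mul_apply]
    rw [ih fun b hb => h b (List.mem_cons_of_mem _ hb), sT_fix x (h a List.mem_cons_self)]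

lemma dperm_fix (S : Finset ℕ) (x : Fin n) (h : ∀ a ∈ S, x.1 + 1 < a ∨ a < x.1) :
    dperm n S x = x := by
  apply wordProd_fix
  intro a ha
  exact h a (by simpa using ha)

lemma swap_comm' (x y u v : Fin n) (h1 : u ≠ x) (h2 : u ≠ y) (h3 : v ≠ x) (h4 : v ≠ y) :
    Equiv.swap x y * Equiv.swap u v = Equiv.swap u v * Equiv.swap x y := by
  have key := Equiv.swap_apply_apply (Equiv.swap x y) u v
  rw [Equiv.swap_apply_of_ne_of_ne h1 h2, Equiv.swap_apply_of_ne_of_ne h3 h4] at key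
  calc Equiv.swap x y * Equiv.swap u v
      = (Equiv.swap x y * Equiv.swap u v * (Equiv.swap x y)⁻¹) * Equiv.swap x y := by
        group
    _ = Equiv.swap u v * Equiv.swap x y := by rw [← key]

lemma sT_comm {a b : ℕ} (h : a + 2 ≤ b ∨ b + 2 ≤ a) : sT n a * sT n b = sT n b * sT n a := by
  by_cases ha : 1 ≤ a ∧ a < n
  · by_cases hb : 1 ≤ b ∧ b < n
    · rw [sT, sT, dif_pos ha, dif_pos hb]
      apply swap_comm' <;>
        · intro hc
          apply_fun Fin.val at hc
          simp at hc
          omega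
    · have : sT n b = 1 := by rw [sT, dif_neg hb]
      simp [this]
  · have : sT n a = 1 := by rw [sT, dif_neg ha]
    simp [this]

/-- a permutation commutes with a swap if it fixes both points -/
lemma swap_comm_of_fix (σ : Equiv.Perm (Fin n)) (x y : Fin n) (hx : σ x = x) (hy : σ y = y) :
    σ * Equiv.swap x y = Equiv.swap x y * σ := by
  have key := Equiv.swap_apply_apply σ x y
  rw [hx, hy] at key
  calc σ * Equiv.swap x y = (σ * Equiv.swap x y * σ⁻¹) * σ := by group
    _ = Equiv.swap x y * σ := by rw [← key]

end Part1
section Part2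
variable {n : ℕ}

lemma sort_split (S : Finset ℕ) (m : ℕ) :
    S.sort (· ≤ ·) =
      ((S.filter (fun a => a ≤ m)).sort (· ≤ ·)) ++ ((S.filter (fun a => m < a)).sort (· ≤ ·)) := by
  refine (fun h1 h2 h3 => List.Perm.eq_of_pairwise' (r := (LE.le : ℕ → ℕ → Prop)) h2 h3 h1) ?_ ?_ ?_
  · apply List.perm_of_nodup_nodup_toFinset_eq (Finset.sort_nodup _ _)
    · rw [List.nodup_append]
      refine ⟨Finset.sort_nodup _ _, Finset.sort_nodup _ _, ?_⟩
      intro a ha b hb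
      rw [Finset.mem_sort] at ha hb
      simp only [Finset.mem_filter] at ha hb
      omega
    · rw [List.toFinset_append]
      simp only [Finset.sort_toFinset]
      ext a
      simp only [Finset.mem_union, Finset.mem_filter]
      by_cases h : a ∈ S
      · simp only [h, true_and, true_iff]
        omega
      · simp [h]
  · exact Finset.pairwise_sort _ _
  · rw [List.pairwise_append]
    refine ⟨Finset.pairwise_sort _ _, Finset.pairwise_sort _ _, ?_⟩
    intro a ha b hb
    rw [Finset.mem_sort] at ha hb
    simp only [Finset.mem_filter] at ha hb
    omega

lemma dperm_split (S : Finset ℕ) (m : ℕ) :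
    dperm n S = dperm n (S.filter (fun a => m < a)) * dperm n (S.filter (fun a => a ≤ m)) := by
  unfold dperm
  rw [sort_split S m, List.reverse_append, wordProd_append]

lemma dperm_empty : dperm n ∅ = 1 := by
  unfold dperm
  rw [Finset.sort_empty]
  rfl

lemma dperm_singleton (a : ℕ) : dperm n {a} = sT n a := by
  unfold dperm
  rw [Finset.sort_singleton]
  simp [wordProd]

end Part2
section Part3
variable {n : ℕ}

lemma dperm_fix' (S : Finset ℕ) (x : ℕ) (hx : x < n)
    (h : ∀ a ∈ S, x + 1 < a ∨ a < x) : dperm n S ⟨x, hx⟩ = ⟨x, hx⟩ :=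
  dperm_fix S ⟨x, hx⟩ h

lemma filter_le_eq_singleton (S : Finset ℕ) (p : ℕ) (hmem : p + 1 ∈ S)
    (hS : ∀ a ∈ S, p + 1 ≤ a) : S.filter (fun a => a ≤ p + 1) = {p + 1} := by
  ext a
  simp only [Finset.mem_filter, Finset.mem_singleton]
  constructor
  · rintro ⟨ha, hle⟩
    have := hS a ha
    omega
  · rintro rfl
    exact ⟨hmem, le_refl _⟩

lemma dperm_apply_run (S : Finset ℕ) (p q : ℕ)
    (hS : ∀ a ∈ S, p + 1 ≤ a ∧ a < n)
    (hrun : ∀ k, p + 1 ≤ k → k ≤ q → k ∈ S)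
    (hq : q + 1 ∉ S) (hpq : p ≤ q) (hqn : q < n) :
    dperm n S ⟨p, by omega⟩ = ⟨q, hqn⟩ := by
  induction' hd : q - p with d ih generalizing p S
  ·
    have hpq' : p = q := by omega
    subst hpq'
    apply dperm_fix'
    intro a ha
    have h1 := (hS a ha).1
    have : a ≠ p + 1 := fun hc => hq (hc ▸ ha)
    omega
  · have hplt : p < q := by omega
    have hp1 : p + 1 ∈ S := hrun (p + 1) (le_refl _) (by omega)
    rw [dperm_split S (p + 1)]
    rw [filter_le_eq_singleton S p hp1 (fun a ha => (hS a ha).1)]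
    simp only [Equiv.Perm.mul_apply]
    have hstep : dperm n {p + 1} (⟨p, by omega⟩ : Fin n) = ⟨p + 1, by omega⟩ := by
      rw [dperm_singleton, sT_eq (by omega) (by omega)]
      have : ((p + 1) - 1) = p := by omega
      simp only [this]
      exact Equiv.swap_apply_left _ _
    rw [hstep]
    exact ih (S.filter (fun a => p + 1 < a)) (p + 1)
      (fun a ha => by
        simp only [Finset.mem_filter] at ha
        exact ⟨by omega, (hS a ha.1).2⟩)
      (fun k hk1 hk2 => by
        simp only [Finset.mem_filter]
        exact ⟨hrun k (by omega) hk2, by omega⟩)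
      (fun hc => hq (by simpa using (Finset.mem_filter.mp hc).1))
      (by omega) (by omega)

lemma braid_helper (x y z : Fin n) (hxy : x ≠ y) (hxz : x ≠ z) (hyz : y ≠ z) :
    Equiv.swap y z * Equiv.swap x y = Equiv.swap x y * Equiv.swap x z := by
  refine Equiv.ext fun w => ?_
  simp only [Equiv.Perm.mul_apply]
  by_cases h1 : w = x
  · rw [h1]
    have l1 : Equiv.swap x y x = y := Equiv.swap_apply_left _ _
    have r1 : Equiv.swap x z x = z := Equiv.swap_apply_left _ _
    have r2 : Equiv.swap x y z = z := Equiv.swap_apply_of_ne_of_ne hxz.symm hyz.symm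
    have l2 : Equiv.swap y z y = z := Equiv.swap_apply_left _ _
    rw [l1, l2, r1, r2]
  · by_cases h2 : w = y
    · rw [h2]
      have l1 : Equiv.swap x y y = x := Equiv.swap_apply_right _ _
      have l2 : Equiv.swap y z x = x := Equiv.swap_apply_of_ne_of_ne hxy hxz
      have r1 : Equiv.swap x z y = y := Equiv.swap_apply_of_ne_of_ne hxy.symm hyz
      rw [l1, l2, r1, l1]
    · by_cases h3 : w = z
      · rw [h3]
        have l1 : Equiv.swap x y z = z := Equiv.swap_apply_of_ne_of_ne hxz.symm hyz.symm
        have l2 : Equiv.swap y z z = y := Equiv.swap_apply_right _ _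
        have r1 : Equiv.swap x z z = x := Equiv.swap_apply_right _ _
        have r2 : Equiv.swap x y x = y := Equiv.swap_apply_left _ _
        rw [l1, l2, r1, r2]
      · have l1 : Equiv.swap x y w = w := Equiv.swap_apply_of_ne_of_ne h1 h2
        have l2 : Equiv.swap y z w = w := Equiv.swap_apply_of_ne_of_ne h2 h3
        have r1 : Equiv.swap x z w = w := Equiv.swap_apply_of_ne_of_ne h1 h3
        rw [l1, l2, r1, l1]

lemma swap_chain (p c : ℕ) (hp : 1 ≤ p) (hpc : p ≤ c) (hc : c < n) :
    sT n c * dperm n (Finset.Icc p (c - 1)) =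
      dperm n (Finset.Icc p (c - 1)) * Equiv.swap ⟨p - 1, by omega⟩ ⟨c, hc⟩ := by
  induction' hd : c - p with d ih generalizing p
  ·
    have : p = c := by omega
    subst this
    have : Finset.Icc p (p - 1) = ∅ := by
      apply Finset.Icc_eq_empty
      omega
    rw [this, dperm_empty, mul_one, one_mul, sT_eq (by omega) hc]
  · have hplt : p < c := by omega
    have hsplit : dperm n (Finset.Icc p (c - 1)) =
        dperm n (Finset.Icc (p + 1) (c - 1)) * sT n p := by
      rw [dperm_split (Finset.Icc p (c - 1)) p]
      congr 1
      · congr 1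
        ext a
        simp only [Finset.mem_filter, Finset.mem_Icc]
        omega
      · have : (Finset.Icc p (c - 1)).filter (fun a => a ≤ p) = {p} := by
          ext a
          simp only [Finset.mem_filter, Finset.mem_Icc, Finset.mem_singleton]
          omega
        rw [this, dperm_singleton]
    rw [hsplit, ← mul_assoc, ih (p + 1) (by omega) (by omega) (by omega)]
    rw [mul_assoc, mul_assoc]
    congr 1
    -- ⊢ swap ⟨p⟩ ⟨c⟩ * sT n p = sT n p * swap ⟨p-1⟩ ⟨c⟩
    rw [sT_eq hp (by omega)]
    have hsimp : (⟨p + 1 - 1, by omega⟩ : Fin n) = (⟨p, by omega⟩ : Fin n) := by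
      apply Fin.ext
      simp
    rw [hsimp]
    apply braid_helper (x := ⟨p - 1, by omega⟩) (y := ⟨p, by omega⟩) (z := ⟨c, hc⟩) <;>
      · intro h
        apply_fun Fin.val at h
        simp at h
        omega

set_option maxHeartbeats 1000000 in
lemma run_conj (A : Finset ℕ) (u c : ℕ) (hu : 1 ≤ u) (huc : u ≤ c) (hc : c < n)
    (hA : ∀ a ∈ A, u + 1 ≤ a ∧ a < n)
    (hIA : ∀ k, u < k → k ≤ c → k ∈ A) (hAno : c + 1 ∉ A) :
    Equiv.swap ⟨u - 1, by omega⟩ ⟨c, hc⟩ * dperm n A = dperm n A * sT n u := by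
  have hfix : dperm n A ⟨u - 1, by omega⟩ = ⟨u - 1, by omega⟩ := by
    apply dperm_fix'
    intro a ha
    have := (hA a ha).1
    omega
  have happ : dperm n A ⟨u, by omega⟩ = ⟨c, hc⟩ :=
    dperm_apply_run A u c hA hIA hAno huc hc
  have key := Equiv.swap_apply_apply (dperm n A) ⟨u - 1, by omega⟩ ⟨u, by omega⟩
  rw [hfix, happ] at key
  rw [key, sT_eq hu (by omega)]
  group

end Part3
section Part4
variable {n : ℕ}

lemma key_core (C A : Finset ℕ) (u c : ℕ) (hu : 1 ≤ u) (huc : u ≤ c) (hcn : c < n)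
    (hC : ∀ b ∈ C, b + 2 ≤ u)
    (hA : ∀ a ∈ A, u + 1 ≤ a ∧ a < n)
    (hIA : ∀ k, u < k → k ≤ c → k ∈ A) (hAno : c + 1 ∉ A) :
    sT n c * dperm n (Finset.Icc u (c - 1)) * dperm n C * dperm n A
      = dperm n (Finset.Icc u (c - 1)) * dperm n C * dperm n A * sT n u := by
  set T : Equiv.Perm (Fin n) := Equiv.swap ⟨u - 1, by omega⟩ ⟨c, hcn⟩ with hT
  have h1 : sT n c * dperm n (Finset.Icc u (c - 1)) =
      dperm n (Finset.Icc u (c - 1)) * T := swap_chain u c hu huc hcn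
  have h2 : T * dperm n C = dperm n C * T := by
    symm
    apply swap_comm_of_fix
    · apply dperm_fix'
      intro b hb
      have := hC b hb
      omega
    · apply dperm_fix'
      intro b hb
      have := hC b hb
      omega
  have h3 : T * dperm n A = dperm n A * sT n u := run_conj A u c hu huc hcn hA hIA hAno
  calc sT n c * dperm n (Finset.Icc u (c - 1)) * dperm n C * dperm n A
      = (sT n c * dperm n (Finset.Icc u (c - 1))) * dperm n C * dperm n A := by
        simp only [mul_assoc]
    _ = (dperm n (Finset.Icc u (c - 1)) * T) * dperm n C * dperm n A := by rw [h1]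
    _ = dperm n (Finset.Icc u (c - 1)) * (T * dperm n C) * dperm n A := by
        simp only [mul_assoc]
    _ = dperm n (Finset.Icc u (c - 1)) * (dperm n C * T) * dperm n A := by rw [h2]
    _ = dperm n (Finset.Icc u (c - 1)) * dperm n C * (T * dperm n A) := by
        simp only [mul_assoc]
    _ = dperm n (Finset.Icc u (c - 1)) * dperm n C * (dperm n A * sT n u) := by rw [h3]
    _ = dperm n (Finset.Icc u (c - 1)) * dperm n C * dperm n A * sT n u := by
        simp only [mul_assoc]

lemma dperm_B_decomp (B : Finset ℕ) (u c : ℕ) (hu : 1 ≤ u) (huc : u ≤ c)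
    (hcB : c ∈ B) (hIB : ∀ k, u ≤ k → k < c → k ∈ B) (hBno : u - 1 ∉ B) :
    dperm n B = dperm n (B.filter (fun a => c < a)) *
      (sT n c * dperm n (Finset.Icc u (c - 1)) * dperm n (B.filter (fun a => a ≤ u - 1))) := by
  rw [dperm_split B c]
  congr 1
  rw [dperm_split (B.filter (fun a => a ≤ c)) (u - 1)]
  have e1 : (B.filter (fun a => a ≤ c)).filter (fun a => u - 1 < a) = Finset.Icc u c := by
    ext a
    simp only [Finset.mem_filter, Finset.mem_Icc]
    constructor
    · rintro ⟨⟨ha, h1⟩, h2⟩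
      omega
    · rintro ⟨h1, h2⟩
      rcases eq_or_lt_of_le h2 with rfl | hlt
      · exact ⟨⟨hcB, le_refl _⟩, by omega⟩
      · exact ⟨⟨hIB a h1 hlt, by omega⟩, by omega⟩
  have e2 : (B.filter (fun a => a ≤ c)).filter (fun a => a ≤ u - 1) =
      B.filter (fun a => a ≤ u - 1) := by
    ext a
    simp only [Finset.mem_filter]
    constructor
    · rintro ⟨⟨ha, _⟩, h2⟩
      exact ⟨ha, h2⟩
    · rintro ⟨ha, h2⟩
      exact ⟨⟨ha, by omega⟩, h2⟩
  rw [e1, e2]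
  have e3 : dperm n (Finset.Icc u c) = sT n c * dperm n (Finset.Icc u (c - 1)) := by
    rw [dperm_split (Finset.Icc u c) (c - 1)]
    have e4 : (Finset.Icc u c).filter (fun a => c - 1 < a) = {c} := by
      ext a
      simp only [Finset.mem_filter, Finset.mem_Icc, Finset.mem_singleton]
      omega
    have e5 : (Finset.Icc u c).filter (fun a => a ≤ c - 1) = Finset.Icc u (c - 1) := by
      ext a
      simp only [Finset.mem_filter, Finset.mem_Icc]
      omega
    rw [e4, e5, dperm_singleton]
  rw [e3, mul_assoc]

lemma dperm_Berase_decomp (B : Finset ℕ) (u c : ℕ) (hu : 1 ≤ u) (huc : u ≤ c)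
    (hcB : c ∈ B) (hIB : ∀ k, u ≤ k → k < c → k ∈ B) (hBno : u - 1 ∉ B) :
    dperm n (B.erase c) = dperm n (B.filter (fun a => c < a)) *
      (dperm n (Finset.Icc u (c - 1)) * dperm n (B.filter (fun a => a ≤ u - 1))) := by
  rw [dperm_split (B.erase c) c]
  have e0 : (B.erase c).filter (fun a => c < a) = B.filter (fun a => c < a) := by
    ext a
    simp only [Finset.mem_filter, Finset.mem_erase]
    constructor
    · rintro ⟨⟨_, ha⟩, h⟩
      exact ⟨ha, h⟩
    · rintro ⟨ha, h⟩
      exact ⟨⟨by omega, ha⟩, h⟩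
  rw [e0]
  congr 1
  rw [dperm_split ((B.erase c).filter (fun a => a ≤ c)) (u - 1)]
  have e1 : ((B.erase c).filter (fun a => a ≤ c)).filter (fun a => u - 1 < a) =
      Finset.Icc u (c - 1) := by
    ext a
    simp only [Finset.mem_filter, Finset.mem_erase, Finset.mem_Icc]
    constructor
    · rintro ⟨⟨⟨hne, ha⟩, h1⟩, h2⟩
      omega
    · rintro ⟨h1, h2⟩
      exact ⟨⟨⟨by omega, hIB a h1 (by omega)⟩, by omega⟩, by omega⟩
  have e2 : ((B.erase c).filter (fun a => a ≤ c)).filter (fun a => a ≤ u - 1) =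
      B.filter (fun a => a ≤ u - 1) := by
    ext a
    simp only [Finset.mem_filter, Finset.mem_erase]
    constructor
    · rintro ⟨⟨⟨_, ha⟩, _⟩, h2⟩
      exact ⟨ha, h2⟩
    · rintro ⟨ha, h2⟩
      exact ⟨⟨⟨by omega, ha⟩, by omega⟩, h2⟩
  rw [e1, e2]

lemma keyA (B A : Finset ℕ) (u c : ℕ)
    (hA : ∀ a ∈ A, 1 ≤ a ∧ a < n)
    (hu : 1 ≤ u) (huc : u ≤ c) (hcn : c < n)
    (hcB : c ∈ B) (hIB : ∀ k, u ≤ k → k < c → k ∈ B) (hBno : u - 1 ∉ B)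
    (hIA : ∀ k, u < k → k ≤ c → k ∈ A) (hAno : c + 1 ∉ A) (huA : u ∉ A) :
    dperm n B * dperm n A = dperm n (B.erase c) * dperm n (insert u A) := by
  set Bhi := B.filter (fun a => c < a)
  set Mid := dperm n (Finset.Icc u (c - 1))
  set Blo := B.filter (fun a => a ≤ u - 1)
  set Ap := A.filter (fun a => u < a)
  set Alo := A.filter (fun a => a ≤ u - 1)
  have hAdec : dperm n A = dperm n Ap * dperm n Alo := by
    rw [dperm_split A u]
    congr 1
    congr 1
    ext a
    simp only [Finset.mem_filter, Alo]
    constructor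
    · rintro ⟨ha, h⟩
      have : a ≠ u := fun hc => huA (hc ▸ ha)
      exact ⟨ha, by omega⟩
    · rintro ⟨ha, h⟩
      exact ⟨ha, by omega⟩
  have hAidec : dperm n (insert u A) = dperm n Ap * (sT n u * dperm n Alo) := by
    rw [dperm_split (insert u A) u]
    have e1 : (insert u A).filter (fun a => u < a) = Ap := by
      ext a
      simp only [Finset.mem_filter, Finset.mem_insert, Ap]
      constructor
      · rintro ⟨rfl | ha, h⟩
        · omega
        · exact ⟨ha, h⟩
      · rintro ⟨ha, h⟩
        exact ⟨Or.inr ha, h⟩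
    have e2 : (insert u A).filter (fun a => a ≤ u) = insert u Alo := by
      ext a
      simp only [Finset.mem_filter, Finset.mem_insert, Alo]
      constructor
      · rintro ⟨rfl | ha, h⟩
        · exact Or.inl rfl
        · right
          have : a ≠ u := fun hc => huA (hc ▸ ha)
          exact ⟨ha, by omega⟩
      · rintro (rfl | ⟨ha, h⟩)
        · exact ⟨Or.inl rfl, le_refl _⟩
        · exact ⟨Or.inr ha, by omega⟩
    rw [e1, e2]
    congr 1
    rw [dperm_split (insert u Alo) (u - 1)]
    have e3 : (insert u Alo).filter (fun a => u - 1 < a) = {u} := by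
      ext a
      simp only [Finset.mem_filter, Finset.mem_insert, Finset.mem_singleton, Alo]
      constructor
      · rintro ⟨rfl | ⟨ha, h1⟩, h2⟩
        · rfl
        · omega
      · rintro rfl
        exact ⟨Or.inl rfl, by omega⟩
    have e4 : (insert u Alo).filter (fun a => a ≤ u - 1) = Alo := by
      ext a
      simp only [Finset.mem_filter, Finset.mem_insert, Alo]
      constructor
      · rintro ⟨rfl | ha, h2⟩
        · omega
        · exact ha
      · rintro ⟨ha, h⟩
        exact ⟨Or.inr ⟨ha, h⟩, h⟩
    rw [e3, e4, dperm_singleton]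
  have hcore : sT n c * Mid * dperm n Blo * dperm n Ap
      = Mid * dperm n Blo * dperm n Ap * sT n u := by
    apply key_core
    · exact hu
    · exact huc
    · exact hcn
    · intro b hb
      simp only [Finset.mem_filter, Blo] at hb
      have : b ≠ u - 1 := fun hc => hBno (hc ▸ hb.1)
      omega
    · intro a ha
      simp only [Finset.mem_filter, Ap] at ha
      exact ⟨by omega, (hA a ha.1).2⟩
    · intro k h1 h2
      simp only [Finset.mem_filter, Ap]
      exact ⟨hIA k h1 h2, h1⟩
    · simp only [Finset.mem_filter, Ap]
      rintro ⟨h, _⟩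
      exact hAno h
  rw [dperm_B_decomp B u c hu huc hcB hIB hBno,
    dperm_Berase_decomp B u c hu huc hcB hIB hBno, hAdec, hAidec]
  calc dperm n Bhi * (sT n c * Mid * dperm n Blo) * (dperm n Ap * dperm n Alo)
      = dperm n Bhi * (sT n c * Mid * dperm n Blo * dperm n Ap) * dperm n Alo := by
        simp only [mul_assoc]
    _ = dperm n Bhi * (Mid * dperm n Blo * dperm n Ap * sT n u) * dperm n Alo := by
        rw [hcore]
    _ = dperm n Bhi * (Mid * dperm n Blo) * (dperm n Ap * (sT n u * dperm n Alo)) := by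
        simp only [mul_assoc]

lemma keyB (B A : Finset ℕ) (u c : ℕ)
    (hA : ∀ a ∈ A, 1 ≤ a ∧ a < n)
    (hu : 1 ≤ u) (huc : u ≤ c) (hcn : c < n)
    (hcB : c ∈ B) (hIB : ∀ k, u ≤ k → k < c → k ∈ B) (hBno : u - 1 ∉ B)
    (hIA : ∀ k, u < k → k ≤ c → k ∈ A) (hAno : c + 1 ∉ A) (huA : u ∈ A) :
    dperm n B * dperm n A = dperm n (B.erase c) * dperm n (A.erase u) := by
  set Bhi := B.filter (fun a => c < a)
  set Mid := dperm n (Finset.Icc u (c - 1))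
  set Blo := B.filter (fun a => a ≤ u - 1)
  set Ap := A.filter (fun a => u < a)
  set Alo := A.filter (fun a => a ≤ u - 1)
  have hAdec : dperm n A = dperm n Ap * (sT n u * dperm n Alo) := by
    rw [dperm_split A u]
    congr 1
    rw [dperm_split (A.filter (fun a => a ≤ u)) (u - 1)]
    have e1 : (A.filter (fun a => a ≤ u)).filter (fun a => u - 1 < a) = {u} := by
      ext a
      simp only [Finset.mem_filter, Finset.mem_singleton]
      constructor
      · rintro ⟨⟨ha, h1⟩, h2⟩
        omega
      · rintro rfl
        exact ⟨⟨huA, le_refl _⟩, by omega⟩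
    have e2 : (A.filter (fun a => a ≤ u)).filter (fun a => a ≤ u - 1) = Alo := by
      ext a
      simp only [Finset.mem_filter, Alo]
      constructor
      · rintro ⟨⟨ha, _⟩, h2⟩
        exact ⟨ha, h2⟩
      · rintro ⟨ha, h2⟩
        exact ⟨⟨ha, by omega⟩, h2⟩
    rw [e1, e2, dperm_singleton]
  have hAedec : dperm n (A.erase u) = dperm n Ap * dperm n Alo := by
    rw [dperm_split (A.erase u) u]
    have e1 : (A.erase u).filter (fun a => u < a) = Ap := by
      ext a
      simp only [Finset.mem_filter, Finset.mem_erase, Ap]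
      constructor
      · rintro ⟨⟨_, ha⟩, h⟩
        exact ⟨ha, h⟩
      · rintro ⟨ha, h⟩
        exact ⟨⟨by omega, ha⟩, h⟩
    have e2 : (A.erase u).filter (fun a => a ≤ u) = Alo := by
      ext a
      simp only [Finset.mem_filter, Finset.mem_erase, Alo]
      constructor
      · rintro ⟨⟨hne, ha⟩, h⟩
        exact ⟨ha, by omega⟩
      · rintro ⟨ha, h⟩
        exact ⟨⟨by omega, ha⟩, by omega⟩
    rw [e1, e2]
  have hcore : sT n c * Mid * dperm n Blo * dperm n Ap
      = Mid * dperm n Blo * dperm n Ap * sT n u := by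
    apply key_core
    · exact hu
    · exact huc
    · exact hcn
    · intro b hb
      simp only [Finset.mem_filter, Blo] at hb
      have : b ≠ u - 1 := fun hc => hBno (hc ▸ hb.1)
      omega
    · intro a ha
      simp only [Finset.mem_filter, Ap] at ha
      exact ⟨by omega, (hA a ha.1).2⟩
    · intro k h1 h2
      simp only [Finset.mem_filter, Ap]
      exact ⟨hIA k h1 h2, h1⟩
    · simp only [Finset.mem_filter, Ap]
      rintro ⟨h, _⟩
      exact hAno h
  rw [dperm_B_decomp B u c hu huc hcB hIB hBno,
    dperm_Berase_decomp B u c hu huc hcB hIB hBno, hAdec, hAedec]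
  calc dperm n Bhi * (sT n c * Mid * dperm n Blo) * (dperm n Ap * (sT n u * dperm n Alo))
      = dperm n Bhi * (sT n c * Mid * dperm n Blo * dperm n Ap) * (sT n u * dperm n Alo) := by
        simp only [mul_assoc]
    _ = dperm n Bhi * (Mid * dperm n Blo * dperm n Ap * sT n u) * (sT n u * dperm n Alo) := by
        rw [hcore]
    _ = dperm n Bhi * (Mid * dperm n Blo * dperm n Ap) * ((sT n u * sT n u) * dperm n Alo) := by
        simp only [mul_assoc]
    _ = dperm n Bhi * (Mid * dperm n Blo) * (dperm n Ap * dperm n Alo) := by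
        rw [sT_sq]
        simp only [mul_assoc, one_mul]

end Part4
section Part5

def IsMatching (bs : List ℕ) (A L R : Finset ℕ) (M : Finset (ℕ × ℕ)) : Prop :=
  (∀ p ∈ M, p.1 < p.2) ∧
  (∀ p ∈ M, ∀ q ∈ M, p.1 = q.1 → p = q) ∧
  (∀ p ∈ M, ∀ q ∈ M, p.2 = q.2 → p = q) ∧
  (∀ b, b ∈ bs ↔ (b ∈ L ∨ ∃ p ∈ M, p.1 = b)) ∧
  (∀ x ∈ L, ∀ p ∈ M, p.1 ≠ x) ∧
  (∀ a, a ∈ A ↔ (a ∈ R ∨ ∃ p ∈ M, p.2 = a)) ∧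
  (∀ r ∈ R, ∀ p ∈ M, p.2 ≠ r) ∧
  (∀ p ∈ M, ∀ x ∈ L, p.1 < x → p.2 ≤ x) ∧
  (∀ p ∈ M, ∀ r ∈ R, p.1 < r → p.2 ≤ r) ∧
  (∀ x ∈ L, ∀ r ∈ R, r ≤ x)

lemma pairAux_matching : ∀ (bs : List ℕ) (A : Finset ℕ), bs.Pairwise (· > ·) →
    ∃ M, IsMatching bs A (pairAux bs A).1 (pairAux bs A).2 M := by
  intro bs
  induction bs with
  | nil =>
    intro A _
    refine ⟨∅, ?_, ?_, ?_, ?_, ?_, ?_, ?_, ?_, ?_, ?_⟩ <;>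
      simp [pairAux]
  | cons b bs ih =>
    intro A hpw
    have hhd : ∀ x ∈ bs, x < b := fun x hx => (List.pairwise_cons.mp hpw).1 x hx
    by_cases h : (A.filter fun a => b < a).Nonempty
    · set a0 := (A.filter fun a => b < a).min' h with ha0
      have ha0mem : a0 ∈ A ∧ b < a0 := by
        have := Finset.min'_mem _ h
        rw [Finset.mem_filter] at this
        exact this
      have ha0min : ∀ y ∈ A, b < y → a0 ≤ y := fun y hy hby =>
        Finset.min'_le _ _ (Finset.mem_filter.mpr ⟨hy, hby⟩)
      have heq : pairAux (b :: bs) A = pairAux bs (A.erase a0) := by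
        simp only [pairAux, dif_pos h]
        rfl
      obtain ⟨M', m1, m2, m3, m4, m5, m6, m7, m8, m9, m10⟩ :=
        ih (A.erase a0) (List.Pairwise.of_cons hpw)
      set L := (pairAux bs (A.erase a0)).1
      set R := (pairAux bs (A.erase a0)).2
      have pfst : ∀ p ∈ M', p.1 ∈ bs := fun p hp => (m4 p.1).mpr (Or.inr ⟨p, hp, rfl⟩)
      have psnd : ∀ p ∈ M', p.2 ∈ A.erase a0 := fun p hp => (m6 p.2).mpr (Or.inr ⟨p, hp, rfl⟩)
      have Lmem : ∀ x ∈ L, x ∈ bs := fun x hx => (m4 x).mpr (Or.inl hx)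
      have Rmem : ∀ r ∈ R, r ∈ A.erase a0 := fun r hr => (m6 r).mpr (Or.inl hr)
      rw [heq]
      refine ⟨insert (b, a0) M', ?_, ?_, ?_, ?_, ?_, ?_, ?_, ?_, ?_, ?_⟩
      · intro p hp
        rcases Finset.mem_insert.mp hp with rfl | hp'
        · exact ha0mem.2
        · exact m1 p hp'
      · intro p hp q hq hfst
        rcases Finset.mem_insert.mp hp with rfl | hp' <;>
          rcases Finset.mem_insert.mp hq with rfl | hq'
        · rfl
        · exact absurd hfst (by have := hhd q.1 (pfst q hq'); omega)
        · exact absurd hfst (by have := hhd p.1 (pfst p hp'); omega)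
        · exact m2 p hp' q hq' hfst
      · intro p hp q hq hsnd
        rcases Finset.mem_insert.mp hp with rfl | hp' <;>
          rcases Finset.mem_insert.mp hq with rfl | hq'
        · rfl
        · exact absurd hsnd.symm (Finset.ne_of_mem_erase (psnd q hq'))
        · exact absurd hsnd (Finset.ne_of_mem_erase (psnd p hp'))
        · exact m3 p hp' q hq' hsnd
      · intro b'
        constructor
        · intro hb'
          rcases List.mem_cons.mp hb' with heq | hb''
          · exact Or.inr ⟨(b, a0), Finset.mem_insert_self _ _, heq.symm⟩
          · rcases (m4 b').mp hb'' with hl | ⟨p, hp, hfst⟩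
            · exact Or.inl hl
            · exact Or.inr ⟨p, Finset.mem_insert_of_mem hp, hfst⟩
        · rintro (hl | ⟨p, hp, rfl⟩)
          · exact List.mem_cons_of_mem _ (Lmem _ hl)
          · rcases Finset.mem_insert.mp hp with rfl | hp'
            · exact List.mem_cons_self
            · exact List.mem_cons_of_mem _ (pfst p hp')
      · intro x hx p hp
        rcases Finset.mem_insert.mp hp with rfl | hp'
        · have := hhd x (Lmem x hx)
          omega
        · exact m5 x hx p hp'
      · intro a
        constructor
        · intro ha
          by_cases haa : a = a0
          · exact Or.inr ⟨(b, a0), Finset.mem_insert_self _ _, haa.symm⟩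
          · rcases (m6 a).mp (Finset.mem_erase.mpr ⟨haa, ha⟩) with hr | ⟨p, hp, hsnd⟩
            · exact Or.inl hr
            · exact Or.inr ⟨p, Finset.mem_insert_of_mem hp, hsnd⟩
        · rintro (hr | ⟨p, hp, rfl⟩)
          · exact Finset.mem_of_mem_erase (Rmem _ hr)
          · rcases Finset.mem_insert.mp hp with rfl | hp'
            · exact ha0mem.1
            · exact Finset.mem_of_mem_erase (psnd p hp')
      · intro r hr p hp
        rcases Finset.mem_insert.mp hp with rfl | hp'
        · exact fun hc => Finset.ne_of_mem_erase (Rmem r hr) hc.symm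
        · exact m7 r hr p hp'
      · intro p hp x hx hlt
        rcases Finset.mem_insert.mp hp with rfl | hp'
        · have := hhd x (Lmem x hx)
          simp only at hlt ⊢
          omega
        · exact m8 p hp' x hx hlt
      · intro p hp r hr hlt
        rcases Finset.mem_insert.mp hp with rfl | hp'
        · exact ha0min r (Finset.mem_of_mem_erase (Rmem r hr)) hlt
        · exact m9 p hp' r hr hlt
      · exact m10
    · have hle : ∀ y ∈ A, y ≤ b := by
        intro y hy
        by_contra hc
        exact h ⟨y, Finset.mem_filter.mpr ⟨hy, by omega⟩⟩
      have heq : pairAux (b :: bs) A = ((pairAux bs A).1 ∪ {b}, (pairAux bs A).2) := by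
        simp only [pairAux, dif_neg h]
      obtain ⟨M', m1, m2, m3, m4, m5, m6, m7, m8, m9, m10⟩ :=
        ih A (List.Pairwise.of_cons hpw)
      set L := (pairAux bs A).1
      set R := (pairAux bs A).2
      have pfst : ∀ p ∈ M', p.1 ∈ bs := fun p hp => (m4 p.1).mpr (Or.inr ⟨p, hp, rfl⟩)
      have psnd : ∀ p ∈ M', p.2 ∈ A := fun p hp => (m6 p.2).mpr (Or.inr ⟨p, hp, rfl⟩)
      have Lmem : ∀ x ∈ L, x ∈ bs := fun x hx => (m4 x).mpr (Or.inl hx)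
      have Rmem : ∀ r ∈ R, r ∈ A := fun r hr => (m6 r).mpr (Or.inl hr)
      rw [heq]
      refine ⟨M', ?_, m2, m3, ?_, ?_, m6, m7, ?_, m9, ?_⟩
      · exact m1
      · intro b'
        simp only [Finset.mem_union, Finset.mem_singleton]
        constructor
        · intro hb'
          rcases List.mem_cons.mp hb' with rfl | hb''
          · exact Or.inl (Or.inr rfl)
          · rcases (m4 b').mp hb'' with hl | hex
            · exact Or.inl (Or.inl hl)
            · exact Or.inr hex
        · rintro ((hl | rfl) | ⟨p, hp, rfl⟩)
          · exact List.mem_cons_of_mem _ (Lmem _ hl)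
          · exact List.mem_cons_self
          · exact List.mem_cons_of_mem _ (pfst p hp)
      · intro x hx p hp
        rcases Finset.mem_union.mp hx with hx' | hx'
        · exact m5 x hx' p hp
        · rw [Finset.mem_singleton] at hx'
          subst hx'
          have := hhd p.1 (pfst p hp)
          omega
      · intro p hp x hx hlt
        rcases Finset.mem_union.mp hx with hx' | hx'
        · exact m8 p hp x hx' hlt
        · rw [Finset.mem_singleton] at hx'
          subst hx'
          exact hle p.2 (psnd p hp)
      · intro x hx r hr
        rcases Finset.mem_union.mp hx with hx' | hx'
        · exact m10 x hx' r hr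
        · rw [Finset.mem_singleton] at hx'
          subst hx'
          exact hle r (Rmem r hr)

lemma exists_matching (B A : Finset ℕ) :
    ∃ M, IsMatching ((B.sort (· ≤ ·)).reverse) A (Ldata B A) (Rdata B A) M := by
  apply pairAux_matching
  rw [List.pairwise_reverse]
  exact (Finset.sortedLT_sort B).pairwise

lemma mem_bs_iff (B : Finset ℕ) (x : ℕ) : x ∈ (B.sort (· ≤ ·)).reverse ↔ x ∈ B := by
  rw [List.mem_reverse, Finset.mem_sort]

end Part5
section Part6

lemma Ldata_subset (B A : Finset ℕ) : Ldata B A ⊆ B := by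
  obtain ⟨M, m1, m2, m3, m4, m5, m6, m7, m8, m9, m10⟩ := exists_matching B A
  intro x hx
  rw [← mem_bs_iff B x]
  exact (m4 x).mpr (Or.inl hx)

lemma Rdata_subset (B A : Finset ℕ) : Rdata B A ⊆ A := by
  obtain ⟨M, m1, m2, m3, m4, m5, m6, m7, m8, m9, m10⟩ := exists_matching B A
  intro r hr
  exact (m6 r).mpr (Or.inl hr)

lemma e_succ_notin (B A : Finset ℕ) (hL : (Ldata B A).Nonempty) :
    (Ldata B A).min' hL + 1 ∉ A := by
  obtain ⟨M, m1, m2, m3, m4, m5, m6, m7, m8, m9, m10⟩ := exists_matching B A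
  set c := (Ldata B A).min' hL with hc
  intro ha
  rcases (m6 (c + 1)).mp ha with hr | ⟨p, hp, hsnd⟩
  · have := m10 c (Finset.min'_mem _ hL) (c + 1) hr
    omega
  · have h1 := m1 p hp
    have hne := m5 c (Finset.min'_mem _ hL) p hp
    have hlt : p.1 < c := by omega
    have := m8 p hp c (Finset.min'_mem _ hL) hlt
    omega

lemma e_interval_A (B A : Finset ℕ) (hL : (Ldata B A).Nonempty) (u : ℕ)
    (hc1 : 1 ≤ (Ldata B A).min' hL) (huc : u ≤ (Ldata B A).min' hL)
    (hIB : ∀ k, u ≤ k → k < (Ldata B A).min' hL → k ∈ B) :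
    ∀ k, u < k → k ≤ (Ldata B A).min' hL → k ∈ A := by
  obtain ⟨M, m1, m2, m3, m4, m5, m6, m7, m8, m9, m10⟩ := exists_matching B A
  set c := (Ldata B A).min' hL with hc
  set N := M.filter (fun p => u ≤ p.1 ∧ p.1 < c) with hN
  have S1 : Finset.Icc u (c - 1) ⊆ N.image Prod.fst := by
    intro k hk
    rw [Finset.mem_Icc] at hk
    have hklt : k < c := by omega
    have hkB : k ∈ B := hIB k hk.1 hklt
    rcases (m4 k).mp ((mem_bs_iff B k).mpr hkB) with hl | ⟨p, hp, hfst⟩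
    · have := Finset.min'_le _ _ hl
      omega
    · exact Finset.mem_image.mpr ⟨p, Finset.mem_filter.mpr ⟨hp, by omega⟩, hfst⟩
  have S2 : N.image Prod.snd ⊆ Finset.Icc (u + 1) c := by
    intro y hy
    rw [Finset.mem_image] at hy
    obtain ⟨p, hp, rfl⟩ := hy
    rw [Finset.mem_filter] at hp
    have h1 := m1 p hp.1
    have h2 := m8 p hp.1 c (Finset.min'_mem _ hL) hp.2.2
    rw [Finset.mem_Icc]
    omega
  have hinj : (N.image Prod.snd).card = N.card := by
    apply Finset.card_image_of_injOn
    intro p hp q hq hpq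
    exact m3 p (Finset.mem_filter.mp hp).1 q (Finset.mem_filter.mp hq).1 hpq
  have hcard1 : (Finset.Icc u (c - 1)).card ≤ N.card :=
    le_trans (Finset.card_le_card S1) (Finset.card_image_le)
  have hc1' : (Finset.Icc u (c - 1)).card = c - u := by
    rw [Nat.card_Icc]
    omega
  have hc2' : (Finset.Icc (u + 1) c).card = c - u := by
    rw [Nat.card_Icc]
    omega
  have heq : N.image Prod.snd = Finset.Icc (u + 1) c := by
    apply Finset.eq_of_subset_of_card_le S2
    rw [hinj, hc2']
    omega
  intro k hk1 hk2
  have : k ∈ N.image Prod.snd := by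
    rw [heq, Finset.mem_Icc]
    omega
  rw [Finset.mem_image] at this
  obtain ⟨p, hp, hsnd⟩ := this
  exact (m6 k).mpr (Or.inr ⟨p, (Finset.mem_filter.mp hp).1, hsnd⟩)

lemma f_pred_notin (B A : Finset ℕ) (hR : (Rdata B A).Nonempty)
    (ha1 : 1 ≤ (Rdata B A).max' hR) :
    (Rdata B A).max' hR - 1 ∉ B := by
  obtain ⟨M, m1, m2, m3, m4, m5, m6, m7, m8, m9, m10⟩ := exists_matching B A
  set a := (Rdata B A).max' hR with ha
  intro hb
  rcases (m4 (a - 1)).mp ((mem_bs_iff B (a - 1)).mpr hb) with hl | ⟨p, hp, hfst⟩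
  · have := m10 (a - 1) hl a (Finset.max'_mem _ hR)
    omega
  · have h1 := m1 p hp
    have h2 := m9 p hp a (Finset.max'_mem _ hR) (by omega)
    have h3 := m7 a (Finset.max'_mem _ hR) p hp
    omega

lemma f_interval_B (B A : Finset ℕ) (hR : (Rdata B A).Nonempty) (s : ℕ)
    (hIA : ∀ k, (Rdata B A).max' hR < k → k ≤ (Rdata B A).max' hR + s → k ∈ A) :
    ∀ k, (Rdata B A).max' hR ≤ k → k < (Rdata B A).max' hR + s → k ∈ B := by
  obtain ⟨M, m1, m2, m3, m4, m5, m6, m7, m8, m9, m10⟩ := exists_matching B A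
  set a := (Rdata B A).max' hR with ha
  set N := M.filter (fun p => a < p.2 ∧ p.2 ≤ a + s) with hN
  have S1 : Finset.Icc (a + 1) (a + s) ⊆ N.image Prod.snd := by
    intro y hy
    rw [Finset.mem_Icc] at hy
    have hyA : y ∈ A := hIA y (by omega) hy.2
    rcases (m6 y).mp hyA with hr | ⟨p, hp, hsnd⟩
    · have := Finset.le_max' _ _ hr
      omega
    · exact Finset.mem_image.mpr ⟨p, Finset.mem_filter.mpr ⟨hp, by omega⟩, hsnd⟩
  have S2 : N.image Prod.fst ⊆ Finset.Icc a (a + s - 1) := by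
    intro x hx
    rw [Finset.mem_image] at hx
    obtain ⟨p, hp, rfl⟩ := hx
    rw [Finset.mem_filter] at hp
    have h1 := m1 p hp.1
    have h2 : a ≤ p.1 := by
      by_contra hc
      have := m9 p hp.1 a (Finset.max'_mem _ hR) (by omega)
      omega
    rw [Finset.mem_Icc]
    omega
  have hinj : (N.image Prod.fst).card = N.card := by
    apply Finset.card_image_of_injOn
    intro p hp q hq hpq
    exact m2 p (Finset.mem_filter.mp hp).1 q (Finset.mem_filter.mp hq).1 hpq
  intro k hk1 hk2
  have hs1 : 1 ≤ s := by omega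
  have hcard1 : (Finset.Icc (a + 1) (a + s)).card ≤ N.card :=
    le_trans (Finset.card_le_card S1) (Finset.card_image_le)
  have hc1' : (Finset.Icc (a + 1) (a + s)).card = s := by
    rw [Nat.card_Icc]
    omega
  have hc2' : (Finset.Icc a (a + s - 1)).card = s := by
    rw [Nat.card_Icc]
    omega
  have heq : N.image Prod.fst = Finset.Icc a (a + s - 1) := by
    apply Finset.eq_of_subset_of_card_le S2
    rw [hinj, hc2']
    omega
  have : k ∈ N.image Prod.fst := by
    rw [heq, Finset.mem_Icc]
    omega
  rw [Finset.mem_image] at this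
  obtain ⟨p, hp, hfst⟩ := this
  rw [← mem_bs_iff B k]
  exact (m4 k).mpr (Or.inr ⟨p, (Finset.mem_filter.mp hp).1, hfst⟩)

end Part6
section Part7

lemma Pl_succ {G : Type*} [Monoid G] {m : ℕ} (f : Fin (m + 1) → G) :
    (List.ofFn f).reverse.prod
      = f (Fin.last m) * (List.ofFn fun j : Fin m => f j.castSucc).reverse.prod := by
  rw [List.ofFn_succ' f, List.concat_eq_append, List.reverse_append]
  simp

lemma revProd_pair {G : Type*} [Monoid G] : ∀ {ℓ : ℕ} (f g : Fin ℓ → G) (i : ℕ),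
    1 ≤ i → i < ℓ →
    (∀ j : Fin ℓ, j.1 ≠ i → j.1 ≠ i - 1 → f j = g j) →
    (∀ j k : Fin ℓ, j.1 = i → k.1 = i - 1 → f j * f k = g j * g k) →
    (List.ofFn f).reverse.prod = (List.ofFn g).reverse.prod := by
  intro ℓ
  induction ℓ with
  | zero => intro f g i h1 h2 _ _; omega
  | succ m ih =>
    intro f g i h1 h2 hsame hpair
    by_cases him : i = m
    · subst him
      obtain ⟨k, rfl⟩ : ∃ k, i = k + 1 := ⟨i - 1, by omega⟩
      rw [Pl_succ f, Pl_succ g, Pl_succ (fun j : Fin (k + 1) => f j.castSucc),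
        Pl_succ (fun j : Fin (k + 1) => g j.castSucc)]
      rw [← mul_assoc, ← mul_assoc]
      congr 1
      · exact hpair (Fin.last (k + 1)) ((Fin.last k).castSucc) rfl rfl
      · refine congrArg List.prod (congrArg List.reverse (congrArg List.ofFn
          (funext fun j => ?_)))
        apply hsame
        · have := j.isLt
          simp only [Fin.coe_castSucc]
          omega
        · have := j.isLt
          simp only [Fin.coe_castSucc]
          omega
    · have him' : i < m := by omega
      rw [Pl_succ f, Pl_succ g]
      congr 1
      · apply hsame
        · simp only [Fin.val_last]
          omega
        · simp only [Fin.val_last]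
          omega
      · exact ih _ _ i h1 him'
          (fun j hj1 hj2 => hsame j.castSucc (by simpa using hj1) (by simpa using hj2))
          (fun j k hj hk => hpair j.castSucc k.castSucc (by simpa using hj) (by simpa using hk))

lemma wordProd_flatten (n : ℕ) (L : List (List ℕ)) :
    wordProd n L.flatten = (L.map (wordProd n)).prod := by
  induction L with
  | nil => rfl
  | cons l L ih =>
    rw [List.flatten_cons, wordProd_append, List.map_cons, List.prod_cons, ih]

lemma len_le_sum (n ℓ : ℕ) (d : Fin ℓ → Finset ℕ) (hd : ∀ j, ∀ a ∈ d j, 1 ≤ a ∧ a < n) :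
    len n ((List.ofFn fun j => dperm n (d j)).reverse.prod) ≤ ∑ j, (d j).card := by
  apply Nat.sInf_le
  refine ⟨((List.ofFn fun j => ((d j).sort (· ≤ ·)).reverse).reverse).flatten, ?_, ?_, ?_⟩
  · intro a ha
    rw [List.mem_flatten] at ha
    obtain ⟨l, hl, hal⟩ := ha
    rw [List.mem_reverse, List.mem_ofFn] at hl
    obtain ⟨j, rfl⟩ := hl
    rw [List.mem_reverse, Finset.mem_sort] at hal
    exact hd j a hal
  · rw [wordProd_flatten, List.map_reverse, List.map_ofFn]
    rfl
  · rw [List.length_flatten, List.map_reverse, List.sum_reverse, List.map_ofFn, List.sum_ofFn]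
    apply Finset.sum_congr rfl
    intro j _
    simp [Finset.length_sort]

lemma sum_two_swap {ℓ : ℕ} (f g : Fin ℓ → ℕ) (I J : Fin ℓ) (hIJ : I ≠ J)
    (h : ∀ j, j ≠ I → j ≠ J → f j = g j) :
    ∑ j, f j + (g I + g J) = ∑ j, g j + (f I + f J) := by
  classical
  have hJmem : J ∈ Finset.univ.erase I := Finset.mem_erase.mpr ⟨hIJ.symm, Finset.mem_univ _⟩
  have hf : ∑ j, f j = ∑ j ∈ (Finset.univ.erase I).erase J, f j + f J + f I := by
    rw [Finset.sum_erase_add _ _ hJmem, Finset.sum_erase_add _ _ (Finset.mem_univ _)]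
  have hg : ∑ j, g j = ∑ j ∈ (Finset.univ.erase I).erase J, g j + g J + g I := by
    rw [Finset.sum_erase_add _ _ hJmem, Finset.sum_erase_add _ _ (Finset.mem_univ _)]
  have hcong : ∑ j ∈ (Finset.univ.erase I).erase J, f j
      = ∑ j ∈ (Finset.univ.erase I).erase J, g j := by
    apply Finset.sum_congr rfl
    intro j hj
    rw [Finset.mem_erase, Finset.mem_erase] at hj
    exact h j hj.2.1 hj.1
  omega

end Part7
section Part8

lemma eOp_eq {ℓ : ℕ} (i : ℕ) (c : Fin ℓ → Finset ℕ) (h1 : 1 ≤ i) (h2 : i < ℓ) (h3 : i - 1 < ℓ)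
    (c' : Fin ℓ → Finset ℕ) (h : eOp i c = some c') :
    ∃ hL : (Ldata (c ⟨i, h2⟩) (c ⟨i - 1, h3⟩)).Nonempty,
      c' = Function.update (Function.update c ⟨i, h2⟩
          ((c ⟨i, h2⟩).erase ((Ldata (c ⟨i, h2⟩) (c ⟨i - 1, h3⟩)).min' hL)))
        ⟨i - 1, h3⟩
        (insert ((Ldata (c ⟨i, h2⟩) (c ⟨i - 1, h3⟩)).min' hL -
            sInf {j | (Ldata (c ⟨i, h2⟩) (c ⟨i - 1, h3⟩)).min' hL - j - 1 ∉ c ⟨i, h2⟩})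
          (c ⟨i - 1, h3⟩)) := by
  rw [eOp, dif_pos ⟨h1, h2⟩] at h
  by_cases hL : (Ldata (c ⟨i, h2⟩) (c ⟨i - 1, h3⟩)).Nonempty
  · refine ⟨hL, ?_⟩
    rw [eC, dif_pos hL] at h
    exact (Option.some.inj h).symm
  · rw [eC, dif_neg hL] at h
    exact absurd h (by simp)

lemma fOp_eq {ℓ : ℕ} (i : ℕ) (c : Fin ℓ → Finset ℕ) (h1 : 1 ≤ i) (h2 : i < ℓ) (h3 : i - 1 < ℓ)
    (c' : Fin ℓ → Finset ℕ) (h : fOp i c = some c') :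
    ∃ hR : (Rdata (c ⟨i, h2⟩) (c ⟨i - 1, h3⟩)).Nonempty,
      c' = Function.update (Function.update c ⟨i, h2⟩
          (insert ((Rdata (c ⟨i, h2⟩) (c ⟨i - 1, h3⟩)).max' hR +
              sInf {j | (Rdata (c ⟨i, h2⟩) (c ⟨i - 1, h3⟩)).max' hR + j + 1 ∉
                c ⟨i - 1, h3⟩})
            (c ⟨i, h2⟩)))
        ⟨i - 1, h3⟩
        ((c ⟨i - 1, h3⟩).erase ((Rdata (c ⟨i, h2⟩) (c ⟨i - 1, h3⟩)).max' hR)) := by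
  rw [fOp, dif_pos ⟨h1, h2⟩] at h
  by_cases hR : (Rdata (c ⟨i, h2⟩) (c ⟨i - 1, h3⟩)).Nonempty
  · refine ⟨hR, ?_⟩
    rw [fC, dif_pos hR] at h
    exact (Option.some.inj h).symm
  · rw [fC, dif_neg hR] at h
    exact absurd h (by simp)

end Part8
section Part9

lemma update_prod_sum (n ℓ : ℕ) (w : Equiv.Perm (Fin n)) (c : Fin ℓ → Finset ℕ) (i : ℕ)
    (hi : 1 ≤ i) (hiℓ : i < ℓ) (hJl : i - 1 < ℓ) (hc : IsDecFactorizationC n ℓ w c)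
    (B' A' : Finset ℕ) (hB'r : ∀ a ∈ B', 1 ≤ a ∧ a < n) (hA'r : ∀ a ∈ A', 1 ≤ a ∧ a < n)
    (hkey : dperm n B' * dperm n A'
      = dperm n (c ⟨i, hiℓ⟩) * dperm n (c ⟨i - 1, hJl⟩)) :
    (∀ j, ∀ a ∈ (Function.update (Function.update c ⟨i, hiℓ⟩ B') ⟨i - 1, hJl⟩ A') j,
        1 ≤ a ∧ a < n) ∧
    (List.ofFn fun j => dperm n
        ((Function.update (Function.update c ⟨i, hiℓ⟩ B') ⟨i - 1, hJl⟩ A') j)).reverse.prod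
      = w ∧
    ∑ j, ((Function.update (Function.update c ⟨i, hiℓ⟩ B') ⟨i - 1, hJl⟩ A') j).card +
        ((c ⟨i, hiℓ⟩).card + (c ⟨i - 1, hJl⟩).card)
      = ∑ j, (c j).card + (B'.card + A'.card) := by
  obtain ⟨hr, hp, hl⟩ := hc
  set I : Fin ℓ := ⟨i, hiℓ⟩ with hI
  set J : Fin ℓ := ⟨i - 1, hJl⟩ with hJ
  have hIJ : I ≠ J := by
    intro h
    apply_fun Fin.val at h
    simp only [hI, hJ] at h
    omega
  set d := Function.update (Function.update c I B') J A' with hd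
  have hdI : d I = B' := by
    rw [hd, Function.update_of_ne hIJ, Function.update_self]
  have hdJ : d J = A' := by
    rw [hd, Function.update_self]
  have hdo : ∀ j, j ≠ I → j ≠ J → d j = c j := by
    intro j h1 h2
    rw [hd, Function.update_of_ne h2, Function.update_of_ne h1]
  refine ⟨?_, ?_, ?_⟩
  · intro j a ha
    by_cases h1 : j = I
    · subst h1
      rw [hdI] at ha
      exact hB'r a ha
    · by_cases h2 : j = J
      · subst h2
        rw [hdJ] at ha
        exact hA'r a ha
      · rw [hdo j h1 h2] at ha
        exact hr j a ha
  · rw [← hp]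
    apply revProd_pair _ _ i hi hiℓ
    · intro j hj1 hj2
      have h1 : j ≠ I := fun hh => hj1 (by rw [hh])
      have h2 : j ≠ J := fun hh => hj2 (by rw [hh])
      rw [hdo j h1 h2]
    · intro j k hj hk
      have hjI : j = I := Fin.ext hj
      have hkJ : k = J := Fin.ext hk
      subst hjI
      subst hkJ
      rw [hdI, hdJ]
      exact hkey
  · have := sum_two_swap (fun j => (d j).card) (fun j => (c j).card) I J hIJ
      (fun j h1 h2 => show (d j).card = (c j).card by rw [hdo j h1 h2])
    simpa only [hdI, hdJ] using this

lemma assemble (n ℓ : ℕ) (w : Equiv.Perm (Fin n)) (c : Fin ℓ → Finset ℕ) (i : ℕ)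
    (hi : 1 ≤ i) (hiℓ : i < ℓ) (hJl : i - 1 < ℓ) (hc : IsDecFactorizationC n ℓ w c)
    (B' A' : Finset ℕ) (hB'r : ∀ a ∈ B', 1 ≤ a ∧ a < n) (hA'r : ∀ a ∈ A', 1 ≤ a ∧ a < n)
    (hkey : dperm n B' * dperm n A'
      = dperm n (c ⟨i, hiℓ⟩) * dperm n (c ⟨i - 1, hJl⟩))
    (hcards : B'.card + A'.card = (c ⟨i, hiℓ⟩).card + (c ⟨i - 1, hJl⟩).card) :
    IsDecFactorizationC n ℓ w
      (Function.update (Function.update c ⟨i, hiℓ⟩ B') ⟨i - 1, hJl⟩ A') := by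
  obtain ⟨h1, h2, h3⟩ := update_prod_sum n ℓ w c i hi hiℓ hJl hc B' A' hB'r hA'r hkey
  refine ⟨h1, h2, ?_⟩
  have := hc.2.2
  omega

lemma too_short (n ℓ : ℕ) (w : Equiv.Perm (Fin n)) (c : Fin ℓ → Finset ℕ) (i : ℕ)
    (hi : 1 ≤ i) (hiℓ : i < ℓ) (hJl : i - 1 < ℓ) (hc : IsDecFactorizationC n ℓ w c)
    (B' A' : Finset ℕ) (hB'r : ∀ a ∈ B', 1 ≤ a ∧ a < n) (hA'r : ∀ a ∈ A', 1 ≤ a ∧ a < n)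
    (hkey : dperm n B' * dperm n A'
      = dperm n (c ⟨i, hiℓ⟩) * dperm n (c ⟨i - 1, hJl⟩))
    (hcards : B'.card + A'.card + 2 ≤ (c ⟨i, hiℓ⟩).card + (c ⟨i - 1, hJl⟩).card) :
    False := by
  obtain ⟨h1, h2, h3⟩ := update_prod_sum n ℓ w c i hi hiℓ hJl hc B' A' hB'r hA'r hkey
  have h4 := len_le_sum n ℓ _ h1
  rw [h2] at h4
  have := hc.2.2
  omega

end Part9

/-- If `ẽᵢ(b) ≠ 0` then `ẽᵢ(b)` is again a decreasing factorization of `w` into `ℓ` factors,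
whose weight (the tuple of factor lengths `(ℓ(w¹),…,ℓ(wℓ))`, here `j ↦ (c j).card`) is
obtained by increasing the `i`-th entry by one and decreasing the `(i+1)`-st entry by one;
similarly for `f̃ᵢ` with the roles of the entries interchanged. -/
theorem crystal_ops_preserve (n ℓ : ℕ) (w : Equiv.Perm (Fin n)) (c : Fin ℓ → Finset ℕ)
    (i : ℕ) (hi : 1 ≤ i) (hiℓ : i < ℓ) (hc : IsDecFactorizationC n ℓ w c) :
    (∀ c', eOp i c = some c' →
      IsDecFactorizationC n ℓ w c' ∧
      (c' ⟨i - 1, by omega⟩).card = (c ⟨i - 1, by omega⟩).card + 1 ∧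
      (c' ⟨i, hiℓ⟩).card + 1 = (c ⟨i, hiℓ⟩).card ∧
      ∀ j : Fin ℓ, j.1 ≠ i → j.1 ≠ i - 1 → (c' j).card = (c j).card) ∧
    (∀ c', fOp i c = some c' →
      IsDecFactorizationC n ℓ w c' ∧
      (c' ⟨i, hiℓ⟩).card = (c ⟨i, hiℓ⟩).card + 1 ∧
      (c' ⟨i - 1, by omega⟩).card + 1 = (c ⟨i - 1, by omega⟩).card ∧
      ∀ j : Fin ℓ, j.1 ≠ i → j.1 ≠ i - 1 → (c' j).card = (c j).card) := by
  have hrange := hc.1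
  have hJl : i - 1 < ℓ := by omega
  have hIJ : (⟨i, hiℓ⟩ : Fin ℓ) ≠ ⟨i - 1, hJl⟩ := by
    intro h
    apply_fun Fin.val at h
    simp only at h
    omega
  constructor
  · -- ẽ part
    rintro c' hc'
    obtain ⟨hL, hc'eq⟩ := eOp_eq i c hi hiℓ hJl c' hc'
    set B := c ⟨i, hiℓ⟩ with hB
    set A := c ⟨i - 1, hJl⟩ with hA
    set cc := (Ldata B A).min' hL with hcc
    set t := sInf {j | cc - j - 1 ∉ B} with ht
    set u := cc - t with hu
    have hBr : ∀ a ∈ B, 1 ≤ a ∧ a < n := hrange _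
    have hAr : ∀ a ∈ A, 1 ≤ a ∧ a < n := hrange _
    have hccB : cc ∈ B := Ldata_subset B A (Finset.min'_mem _ hL)
    have hcc1 : 1 ≤ cc := (hBr cc hccB).1
    have hccn : cc < n := (hBr cc hccB).2
    have h0B : (0 : ℕ) ∉ B := fun h => by have := (hBr 0 h).1; omega
    have htmem : cc - t - 1 ∉ B := by
      apply Nat.sInf_mem (s := {j | cc - j - 1 ∉ B})
      refine ⟨cc, ?_⟩
      show cc - cc - 1 ∉ B
      have he : cc - cc - 1 = 0 := by omega
      rw [he]
      exact h0B
    have htle : t ≤ cc - 1 := by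
      apply Nat.sInf_le
      show cc - (cc - 1) - 1 ∉ B
      have he : cc - (cc - 1) - 1 = 0 := by omega
      rw [he]
      exact h0B
    have hu1 : 1 ≤ u := by omega
    have huc : u ≤ cc := by omega
    have hIB : ∀ k, u ≤ k → k < cc → k ∈ B := by
      intro k hk1 hk2
      by_contra hk
      have hmem : cc - k - 1 ∈ {j | cc - j - 1 ∉ B} := by
        show cc - (cc - k - 1) - 1 ∉ B
        have he : cc - (cc - k - 1) - 1 = k := by omega
        rw [he]
        exact hk
      have := Nat.sInf_le hmem
      omega
    have hBno : u - 1 ∉ B := by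
      have he : u - 1 = cc - t - 1 := by omega
      rw [he]
      exact htmem
    have hAno : cc + 1 ∉ A := e_succ_notin B A hL
    have hIA : ∀ k, u < k → k ≤ cc → k ∈ A := e_interval_A B A hL u hcc1 huc hIB
    have hcardB : 0 < B.card := Finset.card_pos.mpr ⟨cc, hccB⟩
    have eqB : (c ⟨i, hiℓ⟩).card = B.card := rfl
    have eqA : (c ⟨i - 1, hJl⟩).card = A.card := rfl
    by_cases huA : u ∈ A
    · exfalso
      have hkey := keyB B A u cc hAr hu1 huc hccn hccB hIB hBno hIA hAno huA
      apply too_short n ℓ w c i hi hiℓ hJl hc (B.erase cc) (A.erase u)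
        (fun a ha => hBr a (Finset.mem_of_mem_erase ha))
        (fun a ha => hAr a (Finset.mem_of_mem_erase ha))
        hkey.symm
      have h1 : (B.erase cc).card = B.card - 1 := Finset.card_erase_of_mem hccB
      have h2 : (A.erase u).card = A.card - 1 := Finset.card_erase_of_mem huA
      have h3 : 0 < A.card := Finset.card_pos.mpr ⟨u, huA⟩
      omega
    · have hkey := keyA B A u cc hAr hu1 huc hccn hccB hIB hBno hIA hAno huA
      have hB'r : ∀ a ∈ B.erase cc, 1 ≤ a ∧ a < n :=
        fun a ha => hBr a (Finset.mem_of_mem_erase ha)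
      have hA'r : ∀ a ∈ insert u A, 1 ≤ a ∧ a < n := by
        intro a ha
        rcases Finset.mem_insert.mp ha with rfl | ha'
        · exact ⟨hu1, by omega⟩
        · exact hAr a ha'
      have hcard1 : (B.erase cc).card = B.card - 1 := Finset.card_erase_of_mem hccB
      have hcard2 : (insert u A).card = A.card + 1 := Finset.card_insert_of_notMem huA
      have hfact := assemble n ℓ w c i hi hiℓ hJl hc (B.erase cc) (insert u A) hB'r hA'r
        hkey.symm (by omega)
      refine ⟨?_, ?_, ?_, ?_⟩
      · rw [hc'eq]
        exact hfact
      · have hgoal : (Function.update (Function.update c ⟨i, hiℓ⟩ (B.erase cc)) ⟨i - 1, hJl⟩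
            (insert u A) ⟨i - 1, hJl⟩).card = (c ⟨i - 1, hJl⟩).card + 1 := by
          rw [Function.update_self]
          exact hcard2
        rw [hc'eq]
        exact hgoal
      · have hgoal : (Function.update (Function.update c ⟨i, hiℓ⟩ (B.erase cc)) ⟨i - 1, hJl⟩
            (insert u A) ⟨i, hiℓ⟩).card + 1 = (c ⟨i, hiℓ⟩).card := by
          rw [Function.update_of_ne hIJ, Function.update_self, hcard1]
          omega
        rw [hc'eq]
        exact hgoal
      · intro j hj1 hj2
        rw [hc'eq, Function.update_of_ne (fun hh => hj2 (by rw [hh])),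
          Function.update_of_ne (fun hh => hj1 (by rw [hh]))]
  · -- f̃ part
    rintro c' hc'
    obtain ⟨hR, hc'eq⟩ := fOp_eq i c hi hiℓ hJl c' hc'
    set B := c ⟨i, hiℓ⟩ with hB
    set A := c ⟨i - 1, hJl⟩ with hA
    set aa := (Rdata B A).max' hR with haa
    set s := sInf {j | aa + j + 1 ∉ A} with hs
    have hBr : ∀ a ∈ B, 1 ≤ a ∧ a < n := hrange _
    have hAr : ∀ a ∈ A, 1 ≤ a ∧ a < n := hrange _
    have haaA : aa ∈ A := Rdata_subset B A (Finset.max'_mem _ hR)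
    have haa1 : 1 ≤ aa := (hAr aa haaA).1
    have haan : aa < n := (hAr aa haaA).2
    have hnA : ∀ m, n ≤ m → m ∉ A := fun m hm hmem => by
      have := (hAr m hmem).2
      omega
    have hsmem : aa + s + 1 ∉ A := by
      apply Nat.sInf_mem (s := {j | aa + j + 1 ∉ A})
      exact ⟨n, hnA _ (by omega)⟩
    have hIA : ∀ k, aa < k → k ≤ aa + s → k ∈ A := by
      intro k h1 h2
      by_contra hk
      have hmem : k - aa - 1 ∈ {j | aa + j + 1 ∉ A} := by
        show aa + (k - aa - 1) + 1 ∉ A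
        have he : aa + (k - aa - 1) + 1 = k := by omega
        rw [he]
        exact hk
      have := Nat.sInf_le hmem
      omega
    have hasn : aa + s < n := by
      rcases Nat.eq_zero_or_pos s with h | h
      · omega
      · exact (hAr _ (hIA (aa + s) (by omega) (le_refl _))).2
    have hIBf : ∀ k, aa ≤ k → k < aa + s → k ∈ B := f_interval_B B A hR s hIA
    have hBnof : aa - 1 ∉ B := f_pred_notin B A hR haa1
    have hcardA : 0 < A.card := Finset.card_pos.mpr ⟨aa, haaA⟩
    have eqB : (c ⟨i, hiℓ⟩).card = B.card := rfl
    have eqA : (c ⟨i - 1, hJl⟩).card = A.card := rfl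
    by_cases hasB : aa + s ∈ B
    · exfalso
      have hkey := keyB B A aa (aa + s) hAr haa1 (by omega) hasn hasB hIBf hBnof hIA
        hsmem haaA
      apply too_short n ℓ w c i hi hiℓ hJl hc (B.erase (aa + s)) (A.erase aa)
        (fun a ha => hBr a (Finset.mem_of_mem_erase ha))
        (fun a ha => hAr a (Finset.mem_of_mem_erase ha))
        hkey.symm
      have h1 : (B.erase (aa + s)).card = B.card - 1 := Finset.card_erase_of_mem hasB
      have h2 : (A.erase aa).card = A.card - 1 := Finset.card_erase_of_mem haaA
      have h3 : 0 < B.card := Finset.card_pos.mpr ⟨aa + s, hasB⟩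
      omega
    · have hkey := keyA (insert (aa + s) B) (A.erase aa) aa (aa + s)
        (fun a ha => hAr a (Finset.mem_of_mem_erase ha))
        haa1 (by omega) hasn
        (Finset.mem_insert_self _ _)
        (fun k h1 h2 => Finset.mem_insert_of_mem (hIBf k h1 h2))
        (by
          rw [Finset.mem_insert]
          rintro (h | h)
          · omega
          · exact hBnof h)
        (fun k h1 h2 => Finset.mem_erase.mpr ⟨by omega, hIA k h1 h2⟩)
        (fun h => hsmem (Finset.mem_of_mem_erase h))
        (Finset.notMem_erase _ _)
      rw [Finset.erase_insert hasB, Finset.insert_erase haaA] at hkey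
      have hB'r : ∀ a ∈ insert (aa + s) B, 1 ≤ a ∧ a < n := by
        intro a ha
        rcases Finset.mem_insert.mp ha with rfl | ha'
        · exact ⟨by omega, hasn⟩
        · exact hBr a ha'
      have hA'r : ∀ a ∈ A.erase aa, 1 ≤ a ∧ a < n :=
        fun a ha => hAr a (Finset.mem_of_mem_erase ha)
      have hcard1 : (insert (aa + s) B).card = B.card + 1 := Finset.card_insert_of_notMem hasB
      have hcard2 : (A.erase aa).card = A.card - 1 := Finset.card_erase_of_mem haaA
      have hfact := assemble n ℓ w c i hi hiℓ hJl hc (insert (aa + s) B) (A.erase aa) hB'r hA'r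
        hkey (by omega)
      refine ⟨?_, ?_, ?_, ?_⟩
      · rw [hc'eq]
        exact hfact
      · have hgoal : (Function.update (Function.update c ⟨i, hiℓ⟩ (insert (aa + s) B))
            ⟨i - 1, hJl⟩ (A.erase aa) ⟨i, hiℓ⟩).card = (c ⟨i, hiℓ⟩).card + 1 := by
          rw [Function.update_of_ne hIJ, Function.update_self]
          exact hcard1
        rw [hc'eq]
        exact hgoal
      · have hgoal : (Function.update (Function.update c ⟨i, hiℓ⟩ (insert (aa + s) B))
            ⟨i - 1, hJl⟩ (A.erase aa) ⟨i - 1, hJl⟩).card + 1 = (c ⟨i - 1, hJl⟩).card := by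
          rw [Function.update_self, hcard2]
          omega
        rw [hc'eq]
        exact hgoal
      · intro j hj1 hj2
        rw [hc'eq, Function.update_of_ne (fun hh => hj2 (by rw [hh])),
          Function.update_of_ne (fun hh => hj1 (by rw [hh]))]

end
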